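/- Let C be any one of the following three subalgebras of I_n: the subalgebra generated by {X_1,…,X_n}, the subalgebra generated by {∂_1,…,∂_n}, or the subalgebra generated by {∫_1,…,∫_n}. Then the centralizer of C in I_n equals C; in particular each of these three subalgebras is a maximal commutative subalgebra of I_n. -/

import Mathlib

open MvPolynomial

/-- Multiplication by `x_i`, as a `K`-linear endomorphism of `K[x_1,…,x_n]`. -/
noncomputable def xOp (K : Type*) [Field K] (n : ℕ) (i : Fin n) :
    Module.End K (MvPolynomial (Fin n) K) :=
  LinearMap.mulLeft K (X i)

/-- The formal partial derivative `∂/∂x_i`. -/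
noncomputable def dOp (K : Type*) [Field K] (n : ℕ) (i : Fin n) :
    Module.End K (MvPolynomial (Fin n) K) :=
  (pderiv i).toLinearMap

/-- The integration operator `∫_i`, determined by `∫_i(x^α) = x^α·x_i/(α_i+1)`. -/
noncomputable def intOp (K : Type*) [Field K] (n : ℕ) (i : Fin n) :
    Module.End K (MvPolynomial (Fin n) K) :=
  (basisMonomials (Fin n) K).constr K
    (fun α => (((α i : ℕ) : K) + 1)⁻¹ • (monomial (α + Finsupp.single i 1) (1 : K)))

/-- The algebra `I_n` of polynomial integro-differential operators:
the `K`-subalgebra of `End_K(P_n)` generated by the `X_i`, `∂_i` and `∫_i`. -/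
noncomputable def IDO (K : Type*) [Field K] (n : ℕ) :
    Subalgebra K (Module.End K (MvPolynomial (Fin n) K)) :=
  Algebra.adjoin K (Set.range (xOp K n) ∪ Set.range (dOp K n) ∪ Set.range (intOp K n))

/-- `X_i` as an element of `I_n`. -/
noncomputable def xElt (K : Type*) [Field K] (n : ℕ) (i : Fin n) : IDO K n :=
  ⟨xOp K n i, Algebra.subset_adjoin (Or.inl (Or.inl ⟨i, rfl⟩))⟩

/-- `∂_i` as an element of `I_n`. -/
noncomputable def dElt (K : Type*) [Field K] (n : ℕ) (i : Fin n) : IDO K n :=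
  ⟨dOp K n i, Algebra.subset_adjoin (Or.inl (Or.inr ⟨i, rfl⟩))⟩

/-- `∫_i` as an element of `I_n`. -/
noncomputable def intElt (K : Type*) [Field K] (n : ℕ) (i : Fin n) : IDO K n :=
  ⟨intOp K n i, Algebra.subset_adjoin (Or.inr ⟨i, rfl⟩)⟩
set_option linter.unusedSectionVars false
open MvPolynomial

section Aux

variable {K : Type*} [Field K] [CharZero K] {n : ℕ}

/-- generic: adjoin of a pairwise-commuting set is commutative -/
theorem adjoin_comm {R A : Type*} [CommSemiring R] [Semiring A] [Algebra R A] {s : Set A}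
    (hs : ∀ x ∈ s, ∀ y ∈ s, x * y = y * x) :
    ∀ a ∈ Algebra.adjoin R s, ∀ b ∈ Algebra.adjoin R s, a * b = b * a := by
  have h1 : ∀ x ∈ s, ∀ b ∈ Algebra.adjoin R s, x * b = b * x := by
    intro x hx b hb
    induction hb using Algebra.adjoin_induction with
    | mem y hy => exact hs x hx y hy
    | algebraMap r => exact (Algebra.commutes r x).symm
    | add y z hy hz ihy ihz => rw [mul_add, add_mul, ihy, ihz]
    | mul y z hy hz ihy ihz => rw [← mul_assoc, ihy, mul_assoc, ihz, mul_assoc]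
  intro a ha b hb
  induction ha using Algebra.adjoin_induction with
  | mem x hx => exact h1 x hx b hb
  | algebraMap r => exact Algebra.commutes r b
  | add x y hx hy ihx ihy => rw [add_mul, mul_add, ihx, ihy]
  | mul x y hx hy ihx ihy => rw [mul_assoc, ihy, ← mul_assoc, ihx, mul_assoc]

/-- custom induction for multi-indices -/
theorem finsuppInduction {p : (Fin n →₀ ℕ) → Prop} (h0 : p 0)
    (hstep : ∀ (α : Fin n →₀ ℕ) (i : Fin n), p α → p (α + Finsupp.single i 1)) :
    ∀ α, p α := by
  intro α
  induction α using Finsupp.induction with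
  | zero => exact h0
  | single_add i b f hif hb ih =>
    rw [add_comm]
    clear hb hif
    induction b with
    | zero => simpa using ih
    | succ m ihm =>
      have := hstep _ i ihm
      rwa [add_assoc, ← Finsupp.single_add] at this

theorem intOp_monomial (i : Fin n) (α : Fin n →₀ ℕ) (c : K) :
    intOp K n i (monomial α c)
      = (((α i : ℕ) : K) + 1)⁻¹ • monomial (α + Finsupp.single i 1) c := by
  have h1 : (monomial α c : MvPolynomial (Fin n) K) = c • monomial α 1 := by
    rw [smul_monomial, smul_eq_mul, mul_one]
  have h2 : (monomial α 1 : MvPolynomial (Fin n) K) = basisMonomials (Fin n) K α := by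
    rw [coe_basisMonomials]
  rw [h1, map_smul, intOp, h2, Module.Basis.constr_basis]
  rw [smul_comm, smul_monomial, smul_eq_mul, mul_one]

theorem monomial_step (i : Fin n) (α : Fin n →₀ ℕ) (c : K) :
    (monomial (α + Finsupp.single i 1) c : MvPolynomial (Fin n) K)
      = (((α i : ℕ) : K) + 1) • intOp K n i (monomial α c) := by
  rw [intOp_monomial, smul_smul, mul_inv_cancel₀ (Nat.cast_add_one_ne_zero (α i)), one_smul]

end Aux

section Aux2

variable {K : Type*} [Field K] [CharZero K] {n : ℕ}

theorem xOp_comm (i j : Fin n) : xOp K n i * xOp K n j = xOp K n j * xOp K n i := by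
  rw [xOp, xOp, Module.End.mul_eq_comp, Module.End.mul_eq_comp, ← LinearMap.mulLeft_mul,
    ← LinearMap.mulLeft_mul, mul_comm]

theorem intOp_comm (i j : Fin n) : intOp K n i * intOp K n j = intOp K n j * intOp K n i := by
  apply (basisMonomials (Fin n) K).ext
  intro α
  rw [coe_basisMonomials]
  simp only [Module.End.mul_apply, intOp_monomial, map_smul]
  simp only [intOp_monomial, smul_smul]
  rw [add_right_comm]
  congr 1
  rw [Finsupp.add_apply, Finsupp.add_apply, Finsupp.single_apply, Finsupp.single_apply]
  rcases eq_or_ne i j with h | h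
  · subst h; simp
  · rw [if_neg h, if_neg (Ne.symm h)]
    push_cast
    ring

theorem dOp_apply (i : Fin n) (p : MvPolynomial (Fin n) K) : dOp K n i p = pderiv i p := rfl

theorem dOp_comm (i j : Fin n) : dOp K n i * dOp K n j = dOp K n j * dOp K n i := by
  apply (basisMonomials (Fin n) K).ext
  intro α
  rw [coe_basisMonomials]
  simp only [Module.End.mul_apply, dOp_apply, pderiv_monomial]
  rcases eq_or_ne i j with h | h
  · subst h; rfl
  · rw [tsub_tsub, tsub_tsub, add_comm (Finsupp.single j 1)]
    congr 1
    rw [Finsupp.tsub_apply, Finsupp.tsub_apply, Finsupp.single_apply, Finsupp.single_apply,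
      if_neg h, if_neg (Ne.symm h)]
    push_cast [Nat.sub_zero]
    ring

/-! ### Part 1 : multiplication operators -/

theorem mulLeft_mem (p : MvPolynomial (Fin n) K) :
    LinearMap.mulLeft K p ∈ Algebra.adjoin K (Set.range (xOp K n)) := by
  induction p using MvPolynomial.induction_on with
  | C c =>
    have : LinearMap.mulLeft K (C c : MvPolynomial (Fin n) K)
        = algebraMap K (Module.End K (MvPolynomial (Fin n) K)) c := by
      apply LinearMap.ext; intro q
      rw [LinearMap.mulLeft_apply, Module.algebraMap_end_apply, C_mul']
    rw [this]
    exact Subalgebra.algebraMap_mem _ c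
  | add p q hp hq =>
    have : LinearMap.mulLeft K (p + q) = LinearMap.mulLeft K p + LinearMap.mulLeft K q := by
      apply LinearMap.ext; intro r
      simp [add_mul]
    rw [this]; exact add_mem hp hq
  | mul_X p i hp =>
    rw [LinearMap.mulLeft_mul, ← Module.End.mul_eq_comp]
    exact mul_mem hp (Algebra.subset_adjoin ⟨i, rfl⟩)

theorem part1 (a : Module.End K (MvPolynomial (Fin n) K)) :
    (a ∈ IDO K n ∧ ∀ c ∈ Algebra.adjoin K (Set.range (xOp K n)), a * c = c * a) ↔
      a ∈ Algebra.adjoin K (Set.range (xOp K n)) := by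
  constructor
  · rintro ⟨-, hcomm⟩
    have key : a = LinearMap.mulLeft K (a 1) := by
      apply LinearMap.ext; intro q
      have h1 : (a * LinearMap.mulLeft K q) 1 = (LinearMap.mulLeft K q * a) 1 := by
        rw [hcomm _ (mulLeft_mem q)]
      simp only [Module.End.mul_apply, LinearMap.mulLeft_apply, mul_one] at h1
      rw [LinearMap.mulLeft_apply, h1, mul_comm]
    rw [key]; exact mulLeft_mem _
  · intro ha
    refine ⟨Algebra.adjoin_mono (fun x hx => Or.inl (Or.inl hx)) ha, fun c hc => ?_⟩
    exact adjoin_comm (by rintro x ⟨i, rfl⟩ y ⟨j, rfl⟩; exact xOp_comm i j) a ha c hc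

/-! ### Part 3 : integration operators -/

theorem int_unique {a b : Module.End K (MvPolynomial (Fin n) K)}
    (ha : ∀ i, a * intOp K n i = intOp K n i * a)
    (hb : ∀ i, b * intOp K n i = intOp K n i * b)
    (h1 : a 1 = b 1) : a = b := by
  have key : ∀ α : Fin n →₀ ℕ, a (monomial α 1) = b (monomial α 1) := by
    intro α
    induction α using finsuppInduction with
    | h0 => simpa [monomial_zero'] using h1
    | hstep α i ih =>
      rw [monomial_step, map_smul, map_smul]
      congr 1
      have hc : a (intOp K n i (monomial α 1)) = intOp K n i (a (monomial α 1)) := by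
        have := DFunLike.congr_fun (ha i) (monomial α (1 : K))
        simpa [Module.End.mul_apply] using this
      have hc' : b (intOp K n i (monomial α 1)) = intOp K n i (b (monomial α 1)) := by
        have := DFunLike.congr_fun (hb i) (monomial α (1 : K))
        simpa [Module.End.mul_apply] using this
      rw [hc, hc', ih]
  apply (basisMonomials (Fin n) K).ext
  intro α
  rw [coe_basisMonomials]
  exact key α

theorem exists_int (q : MvPolynomial (Fin n) K) :
    ∃ b ∈ Algebra.adjoin K (Set.range (intOp K n)), b 1 = q := by
  induction q using MvPolynomial.induction_on' with
  | add p q hp hq =>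
    obtain ⟨b1, hb1, e1⟩ := hp
    obtain ⟨b2, hb2, e2⟩ := hq
    exact ⟨b1 + b2, add_mem hb1 hb2, by simp [e1, e2]⟩
  | monomial α c =>
    induction α using finsuppInduction with
    | h0 =>
      refine ⟨algebraMap K _ c, Subalgebra.algebraMap_mem _ c, ?_⟩
      rw [Module.algebraMap_end_apply, monomial_zero', Algebra.smul_def, mul_one]
      rfl
    | hstep α i ih =>
      obtain ⟨b, hb, e⟩ := ih
      refine ⟨(((α i : ℕ) : K) + 1) • (intOp K n i * b),
        SMulMemClass.smul_mem _ (mul_mem (Algebra.subset_adjoin ⟨i, rfl⟩) hb), ?_⟩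
      rw [LinearMap.smul_apply, Module.End.mul_apply, e, ← monomial_step]

theorem part3 (a : Module.End K (MvPolynomial (Fin n) K)) :
    (a ∈ IDO K n ∧ ∀ c ∈ Algebra.adjoin K (Set.range (intOp K n)), a * c = c * a) ↔
      a ∈ Algebra.adjoin K (Set.range (intOp K n)) := by
  have hgen : ∀ x ∈ Set.range (intOp K n), ∀ y ∈ Set.range (intOp K n), x * y = y * x := by
    rintro x ⟨i, rfl⟩ y ⟨j, rfl⟩; exact intOp_comm i j
  constructor
  · rintro ⟨-, hcomm⟩
    obtain ⟨b, hb, e⟩ := exists_int (K := K) (n := n) (a 1)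
    have : a = b := by
      refine int_unique (fun i => hcomm _ (Algebra.subset_adjoin ⟨i, rfl⟩)) (fun i => ?_) e.symm
      exact adjoin_comm hgen b hb _ (Algebra.subset_adjoin ⟨i, rfl⟩)
    rw [this]; exact hb
  · intro ha
    exact ⟨Algebra.adjoin_mono (fun x hx => Or.inr hx) ha,
      fun c hc => adjoin_comm hgen a ha c hc⟩

end Aux2
section Aux3

variable {K : Type*} [Field K] [CharZero K] {n : ℕ}

/-! ### Bandedness -/

/-- `a` raises no monomial's exponents downward by more than `N`. -/
def Banded (N : ℕ) (a : Module.End K (MvPolynomial (Fin n) K)) : Prop :=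
  ∀ (α γ : Fin n →₀ ℕ), coeff γ (a (monomial α 1)) ≠ 0 → ∀ i, α i ≤ γ i + N

theorem apply_eq_sum (a : Module.End K (MvPolynomial (Fin n) K)) (p : MvPolynomial (Fin n) K) :
    a p = ∑ δ ∈ p.support, coeff δ p • a (monomial δ 1) := by
  conv_lhs => rw [p.as_sum, map_sum]
  refine Finset.sum_congr rfl fun δ _ => ?_
  rw [← map_smul, smul_monomial, smul_eq_mul, mul_one]

theorem Banded.apply {N : ℕ} {a : Module.End K (MvPolynomial (Fin n) K)} (h : Banded N a)
    (p : MvPolynomial (Fin n) K) (γ : Fin n →₀ ℕ) (hγ : coeff γ (a p) ≠ 0) :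
    ∃ δ ∈ p.support, ∀ i, δ i ≤ γ i + N := by
  rw [apply_eq_sum, coeff_sum] at hγ
  obtain ⟨δ, hδ, hne⟩ := Finset.exists_ne_zero_of_sum_ne_zero hγ
  rw [coeff_smul] at hne
  exact ⟨δ, hδ, h δ γ (right_ne_zero_of_mul (by simpa using hne))⟩

theorem Banded.mul {N₁ N₂ : ℕ} {a b : Module.End K (MvPolynomial (Fin n) K)}
    (ha : Banded N₁ a) (hb : Banded N₂ b) : Banded (N₁ + N₂) (a * b) := by
  intro α γ h i
  rw [Module.End.mul_apply] at h
  obtain ⟨δ, hδ, hle⟩ := ha.apply _ γ h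
  rw [mem_support_iff] at hδ
  have := hb α δ hδ i
  have := hle i
  omega

theorem Banded.add {N₁ N₂ : ℕ} {a b : Module.End K (MvPolynomial (Fin n) K)}
    (ha : Banded N₁ a) (hb : Banded N₂ b) : Banded (max N₁ N₂) (a + b) := by
  intro α γ h i
  rw [LinearMap.add_apply, coeff_add] at h
  by_cases h1 : coeff γ (a (monomial α 1)) = 0
  · have := hb α γ (by intro h2; rw [h1, h2, add_zero] at h; exact h rfl) i
    omega
  · have := ha α γ h1 i
    omega

theorem banded_algebraMap (r : K) :
    Banded (n := n) 0 (algebraMap K (Module.End K (MvPolynomial (Fin n) K)) r) := by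
  intro α γ h i
  classical
  rw [Module.algebraMap_end_apply, coeff_smul, smul_eq_mul] at h
  have := right_ne_zero_of_mul h
  rw [coeff_monomial] at this
  split_ifs at this with he
  · subst he; omega
  · exact absurd rfl this

theorem banded_xOp (i : Fin n) : Banded 0 (xOp K n i) := by
  intro α γ h j
  classical
  rw [xOp, LinearMap.mulLeft_apply, X, monomial_mul, one_mul, coeff_monomial] at h
  split_ifs at h with he
  · have := DFunLike.congr_fun he j
    simp only [Finsupp.add_apply] at this
    omega
  · exact absurd rfl h

theorem banded_dOp (i : Fin n) : Banded 1 (dOp K n i) := by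
  intro α γ h j
  classical
  rw [dOp_apply, pderiv_monomial, coeff_monomial] at h
  split_ifs at h with he
  · have := DFunLike.congr_fun he j
    rw [Finsupp.tsub_apply] at this
    have hs : (Finsupp.single i 1 : Fin n →₀ ℕ) j ≤ 1 := by
      rw [Finsupp.single_apply]; split_ifs <;> omega
    omega
  · exact absurd rfl h

theorem banded_intOp (i : Fin n) : Banded 0 (intOp K n i) := by
  intro α γ h j
  classical
  rw [intOp_monomial, coeff_smul, smul_eq_mul] at h
  have h2 := right_ne_zero_of_mul h
  rw [coeff_monomial] at h2
  split_ifs at h2 with he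
  · have := DFunLike.congr_fun he j
    simp only [Finsupp.add_apply] at this
    omega
  · exact absurd rfl h2

theorem IDO_banded {a : Module.End K (MvPolynomial (Fin n) K)} (ha : a ∈ IDO K n) :
    ∃ N, Banded N a := by
  induction ha using Algebra.adjoin_induction with
  | mem x hx =>
    rcases hx with (⟨i, rfl⟩ | ⟨i, rfl⟩) | ⟨i, rfl⟩
    · exact ⟨0, banded_xOp i⟩
    · exact ⟨1, banded_dOp i⟩
    · exact ⟨0, banded_intOp i⟩
  | algebraMap r => exact ⟨0, banded_algebraMap r⟩
  | add x y hx hy ihx ihy =>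
    obtain ⟨N₁, h₁⟩ := ihx; obtain ⟨N₂, h₂⟩ := ihy
    exact ⟨max N₁ N₂, h₁.add h₂⟩
  | mul x y hx hy ihx ihy =>
    obtain ⟨N₁, h₁⟩ := ihx; obtain ⟨N₂, h₂⟩ := ihy
    exact ⟨N₁ + N₂, h₁.mul h₂⟩

end Aux3
section Aux4

variable {K : Type*} [Field K] [CharZero K] {n : ℕ}

theorem coeff_pderiv (i : Fin n) (γ : Fin n →₀ ℕ) (hγ : 1 ≤ γ i) (p : MvPolynomial (Fin n) K) :
    coeff (γ - Finsupp.single i 1) (pderiv i p) = (γ i : K) * coeff γ p := by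
  classical
  induction p using MvPolynomial.induction_on' with
  | add p q hp hq => rw [map_add, coeff_add, coeff_add, hp, hq, mul_add]
  | monomial s c =>
    rw [pderiv_monomial, coeff_monomial, coeff_monomial]
    by_cases hs : s = γ
    · subst hs; rw [if_pos rfl, if_pos rfl, mul_comm]
    · rw [if_neg hs, mul_zero]
      split_ifs with he
      · have hsi : s i = 0 := by
          by_contra hne
          apply hs
          ext j
          have hj := DFunLike.congr_fun he j
          rw [Finsupp.tsub_apply, Finsupp.tsub_apply, Finsupp.single_apply] at hj
          rcases eq_or_ne i j with rfl | hji
          · rw [if_pos rfl] at hj; omega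
          · rw [if_neg hji] at hj; omega
        rw [hsi, Nat.cast_zero, mul_zero]
      · rfl

theorem eq_C_of_pderiv_eq_zero {p : MvPolynomial (Fin n) K}
    (h : ∀ i, pderiv i p = 0) : p = C (coeff 0 p) := by
  apply MvPolynomial.ext
  intro γ
  rcases eq_or_ne γ 0 with rfl | hγ
  · simp [coeff_C]
  · rw [coeff_C, if_neg (Ne.symm hγ)]
    obtain ⟨i, hi⟩ := Finsupp.ne_iff.mp hγ
    rw [Finsupp.coe_zero, Pi.zero_apply] at hi
    have h2 := coeff_pderiv i γ (by omega) p
    rw [h i, coeff_zero] at h2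
    have hne : ((γ i : ℕ) : K) ≠ 0 := Nat.cast_ne_zero.mpr hi
    exact (mul_eq_zero.mp h2.symm).resolve_left hne

theorem deg_sub (α : Fin n →₀ ℕ) (j : Fin n) (hj : 1 ≤ α j) :
    (∑ k, (α - Finsupp.single j 1 : Fin n →₀ ℕ) k) + 1 = ∑ k, α k := by
  classical
  have h1 : ∀ k ∈ Finset.univ.erase j, (α - Finsupp.single j 1 : Fin n →₀ ℕ) k = α k := by
    intro k hk
    rw [Finsupp.tsub_apply, Finsupp.single_apply, if_neg (fun h => (Finset.mem_erase.mp hk).1 h.symm)]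
    omega
  rw [← Finset.add_sum_erase _ _ (Finset.mem_univ j),
    ← Finset.add_sum_erase _ (fun k => α k) (Finset.mem_univ j),
    Finset.sum_congr rfl h1]
  have h2 : (α - Finsupp.single j 1 : Fin n →₀ ℕ) j = α j - 1 := by
    rw [Finsupp.tsub_apply, Finsupp.single_apply, if_pos rfl]
  have h4 : (Finset.univ.erase j).sum ⇑α = ∑ x ∈ Finset.univ.erase j, α x := rfl
  rw [h2, h4]
  omega

theorem d_step {a b : Module.End K (MvPolynomial (Fin n) K)}
    (ha : ∀ i, a * dOp K n i = dOp K n i * a)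
    (hb : ∀ i, b * dOp K n i = dOp K n i * b)
    (h : ∀ α : Fin n →₀ ℕ, coeff 0 (a (monomial α 1)) = coeff 0 (b (monomial α 1)))
    (α : Fin n →₀ ℕ)
    (ih : ∀ j, 1 ≤ α j →
      a (monomial (α - Finsupp.single j 1) 1) = b (monomial (α - Finsupp.single j 1) 1)) :
    a (monomial α 1) = b (monomial α 1) := by
  have hder : ∀ j, pderiv j (a (monomial α 1) - b (monomial α 1)) = 0 := by
    intro j
    have hca : pderiv j (a (monomial α 1)) = a (pderiv j (monomial α 1)) := by
      have := DFunLike.congr_fun (ha j) (monomial α (1 : K))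
      simpa [Module.End.mul_apply, dOp_apply] using this.symm
    have hcb : pderiv j (b (monomial α 1)) = b (pderiv j (monomial α 1)) := by
      have := DFunLike.congr_fun (hb j) (monomial α (1 : K))
      simpa [Module.End.mul_apply, dOp_apply] using this.symm
    have hpd : pderiv j (monomial α (1 : K))
        = ((α j : ℕ) : K) • monomial (α - Finsupp.single j 1) 1 := by
      rw [pderiv_monomial, one_mul, smul_monomial, smul_eq_mul, mul_one]
    rw [map_sub, hca, hcb, hpd, map_smul, map_smul]
    rcases Nat.eq_zero_or_pos (α j) with h0 | hpos
    · rw [h0]; simp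
    · rw [ih j hpos, sub_self]
  have hconst := eq_C_of_pderiv_eq_zero hder
  rw [coeff_sub, h α, sub_self, map_zero] at hconst
  exact sub_eq_zero.mp hconst

theorem d_unique {a b : Module.End K (MvPolynomial (Fin n) K)}
    (ha : ∀ i, a * dOp K n i = dOp K n i * a)
    (hb : ∀ i, b * dOp K n i = dOp K n i * b)
    (h : ∀ α : Fin n →₀ ℕ, coeff 0 (a (monomial α 1)) = coeff 0 (b (monomial α 1))) :
    a = b := by
  have key : ∀ (d : ℕ) (α : Fin n →₀ ℕ), (∑ k, α k) ≤ d →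
      a (monomial α 1) = b (monomial α 1) := by
    intro d
    induction d with
    | zero =>
      intro α hα
      refine d_step ha hb h α fun j hj => ?_
      exfalso
      have h3 : α j ≤ ∑ k, α k :=
        Finset.single_le_sum (fun k _ => Nat.zero_le _) (Finset.mem_univ j)
      omega
    | succ d ih =>
      intro α hα
      refine d_step ha hb h α fun j hj => ?_
      refine ih _ ?_
      have := deg_sub α j hj
      omega
  apply (basisMonomials (Fin n) K).ext
  intro α
  rw [coe_basisMonomials]
  exact key (∑ k, α k) α le_rfl

end Aux4
section Aux5

variable {K : Type*} [Field K] [CharZero K] {n : ℕ}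

theorem exists_Dpow (β : Fin n →₀ ℕ) :
    ∃ D ∈ Algebra.adjoin K (Set.range (dOp K n)),
      ∀ (α : Fin n →₀ ℕ) (c : K),
        D (monomial α c)
          = monomial (α - β) (c * ∏ i, ((α i).descFactorial (β i) : K)) := by
  classical
  induction β using finsuppInduction with
  | h0 =>
    refine ⟨1, one_mem _, fun α c => ?_⟩
    simp
  | hstep β j ih =>
    obtain ⟨D, hD, hDf⟩ := ih
    refine ⟨dOp K n j * D, mul_mem (Algebra.subset_adjoin ⟨j, rfl⟩) hD, fun α c => ?_⟩
    rw [Module.End.mul_apply, hDf, dOp_apply, pderiv_monomial]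
    have he : α - β - Finsupp.single j 1 = α - (β + Finsupp.single j 1) := by
      rw [tsub_tsub]
    have hβj : ∀ i, (β + Finsupp.single j 1 : Fin n →₀ ℕ) i
        = if i = j then β i + 1 else β i := by
      intro i
      rw [Finsupp.add_apply, Finsupp.single_apply]
      split_ifs with h1 h2 h3
      · rfl
      · exact absurd h1.symm h2
      · exact absurd h3.symm h1
      · rfl
    have hprod : (∏ i, ((α i).descFactorial ((β + Finsupp.single j 1 : Fin n →₀ ℕ) i) : K))
        = (((α - β : Fin n →₀ ℕ) j : ℕ) : K) * ∏ i, ((α i).descFactorial (β i) : K) := by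
      rw [← Finset.mul_prod_erase _ _ (Finset.mem_univ j),
        ← Finset.mul_prod_erase _ (fun i => (((α i).descFactorial (β i) : ℕ) : K))
          (Finset.mem_univ j)]
      have h5 : ∀ i ∈ Finset.univ.erase j,
          ((α i).descFactorial ((β + Finsupp.single j 1 : Fin n →₀ ℕ) i) : K)
            = ((α i).descFactorial (β i) : K) := by
        intro i hi
        rw [hβj, if_neg (Finset.mem_erase.mp hi).1]
      rw [Finset.prod_congr rfl h5, hβj, if_pos rfl, Nat.descFactorial_succ,
        Finsupp.tsub_apply, Nat.cast_mul]
      ring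
    rw [he, hprod]
    congr 1
    ring
  -- done

theorem Dpow_coeff_zero {D : Module.End K (MvPolynomial (Fin n) K)} {β : Fin n →₀ ℕ}
    (hDf : ∀ (α : Fin n →₀ ℕ) (c : K),
      D (monomial α c) = monomial (α - β) (c * ∏ i, ((α i).descFactorial (β i) : K)))
    (α : Fin n →₀ ℕ) :
    coeff 0 (D (monomial α 1))
      = if β = α then (∏ i, ((α i).factorial : K)) else 0 := by
  classical
  rw [hDf, one_mul, coeff_monomial]
  by_cases hβα : β = α
  · subst hβα
    rw [if_pos (tsub_self β), if_pos rfl]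
    exact Finset.prod_congr rfl fun i _ => by rw [Nat.descFactorial_self]
  · rw [if_neg hβα]
    by_cases hle : α - β = 0
    · rw [if_pos hle]
      have hαβ : α ≤ β := tsub_eq_zero_iff_le.mp hle
      obtain ⟨i, hi⟩ : ∃ i, α i < β i := by
        by_contra hcon
        push_neg at hcon
        exact hβα (le_antisymm (Finsupp.le_def.mpr hcon) hαβ)
      refine Finset.prod_eq_zero (Finset.mem_univ i) ?_
      rw [Nat.descFactorial_eq_zero_iff_lt.mpr hi, Nat.cast_zero]
    · rw [if_neg hle]

theorem part2 (a : Module.End K (MvPolynomial (Fin n) K)) :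
    (a ∈ IDO K n ∧ ∀ c ∈ Algebra.adjoin K (Set.range (dOp K n)), a * c = c * a) ↔
      a ∈ Algebra.adjoin K (Set.range (dOp K n)) := by
  have hgen : ∀ x ∈ Set.range (dOp K n), ∀ y ∈ Set.range (dOp K n), x * y = y * x := by
    rintro x ⟨i, rfl⟩ y ⟨j, rfl⟩; exact dOp_comm i j
  constructor
  · rintro ⟨haI, hcomm⟩
    obtain ⟨N, hN⟩ := IDO_banded haI
    classical
    set M : Fin n →₀ ℕ := Finsupp.equivFunOnFinite.symm (fun _ => N) with hM
    have hMi : ∀ i, M i = N := fun i => rfl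
    choose D hDmem hDf using fun β : Fin n →₀ ℕ => exists_Dpow (K := K) (n := n) β
    set b := ∑ β ∈ Finset.Iic M,
      ((coeff 0 (a (monomial β 1))) * (∏ i, ((β i).factorial : K))⁻¹) • D β with hb
    have hbmem : b ∈ Algebra.adjoin K (Set.range (dOp K n)) :=
      Subalgebra.sum_mem _ fun β _ => SMulMemClass.smul_mem _ (hDmem β)
    have hbc : ∀ i, b * dOp K n i = dOp K n i * b := fun i =>
      adjoin_comm hgen b hbmem _ (Algebra.subset_adjoin ⟨i, rfl⟩)
    have hvanish : ∀ α : Fin n →₀ ℕ, α ∉ Finset.Iic M → coeff 0 (a (monomial α 1)) = 0 := by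
      intro α hα
      by_contra hne
      apply hα
      rw [Finset.mem_Iic]
      refine Finsupp.le_def.mpr fun i => ?_
      have := hN α 0 hne i
      rw [hMi]
      simpa using this
    have hcoeff : ∀ α : Fin n →₀ ℕ,
        coeff 0 (b (monomial α 1)) = coeff 0 (a (monomial α 1)) := by
      intro α
      have hfact : (∏ i, ((α i).factorial : K)) ≠ 0 := by
        rw [← Nat.cast_prod]
        exact Nat.cast_ne_zero.mpr (Finset.prod_pos fun i _ => (α i).factorial_pos).ne'
      rw [hb, LinearMap.sum_apply, coeff_sum]
      simp only [LinearMap.smul_apply]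
      have hterm : ∀ β ∈ Finset.Iic M,
          coeff 0 (((coeff 0 (a (monomial β 1))) * (∏ i, ((β i).factorial : K))⁻¹ : K)
              • D β (monomial α 1))
            = if β = α then coeff 0 (a (monomial β 1)) else 0 := by
        intro β _
        rw [coeff_smul, smul_eq_mul, Dpow_coeff_zero (hDf β)]
        split_ifs with h
        · subst h
          rw [mul_assoc, inv_mul_cancel₀ hfact, mul_one]
        · rw [mul_zero]
      rw [Finset.sum_congr rfl hterm, Finset.sum_ite_eq' (Finset.Iic M)]
      split_ifs with h
      · rfl
      · exact (hvanish α h).symm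
    have hab : a = b :=
      d_unique (fun i => hcomm _ (Algebra.subset_adjoin ⟨i, rfl⟩)) hbc
        (fun α => (hcoeff α).symm)
    rw [hab]
    exact hbmem
  · intro ha
    exact ⟨Algebra.adjoin_mono (fun x hx => Or.inl (Or.inr hx)) ha,
      fun c hc => adjoin_comm hgen a ha c hc⟩

end Aux5
/-- For `C` any of the subalgebras generated by `{X_1,…,X_n}`, by `{∂_1,…,∂_n}`, or by
`{∫_1,…,∫_n}`, the centralizer of `C` in `I_n` equals `C` (in particular each of these is a
maximal commutative subalgebra of `I_n`). -/
theorem statement8 (K : Type*) [Field K] [CharZero K] (n : ℕ) :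
    (∀ a : Module.End K (MvPolynomial (Fin n) K),
      (a ∈ IDO K n ∧ ∀ c ∈ Algebra.adjoin K (Set.range (xOp K n)), a * c = c * a) ↔
        a ∈ Algebra.adjoin K (Set.range (xOp K n))) ∧
    (∀ a : Module.End K (MvPolynomial (Fin n) K),
      (a ∈ IDO K n ∧ ∀ c ∈ Algebra.adjoin K (Set.range (dOp K n)), a * c = c * a) ↔
        a ∈ Algebra.adjoin K (Set.range (dOp K n))) ∧
    (∀ a : Module.End K (MvPolynomial (Fin n) K),
      (a ∈ IDO K n ∧ ∀ c ∈ Algebra.adjoin K (Set.range (intOp K n)), a * c = c * a) ↔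
        a ∈ Algebra.adjoin K (Set.range (intOp K n))) :=
  ⟨part1, part2, part3⟩
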